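/- If S_∞ ≠ ∅ then [S_∞] is nonempty, and moreover [S_∞] contains both a point of S and a point of the complement of S. -/

import Mathlib

open Ordinal Filter Topology

/-- The first `n` values of `f` as a finite sequence. -/
def seg (f : ℕ → ℕ) (n : ℕ) : List ℕ := (List.range n).map f

/-- `[X]`: the set of infinite sequences all of whose initial segments lie in `X`. -/
def ext (X : Set (List ℕ)) : Set (ℕ → ℕ) := {f | ∀ n, seg f n ∈ X}

/-- `σ` is an initial segment of `f`. -/
def isInit (σ : List ℕ) (f : ℕ → ℕ) : Prop := seg f σ.length = σ

/-- One step of the derivative process relative to `S`. -/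
def derivStep (S : Set (ℕ → ℕ)) (X : Set (List ℕ)) : Set (List ℕ) :=
  {x ∈ X | ∃ f g : ℕ → ℕ, f ∈ ext X ∧ g ∈ ext X ∧ isInit x f ∧ isInit x g ∧ f ∈ S ∧ g ∉ S}

/-- The transfinite sequence `S_α`. -/
noncomputable def dSeq (S : Set (ℕ → ℕ)) (α : Ordinal.{0}) : Set (List ℕ) :=
  Ordinal.limitRecOn α Set.univ (fun _ X => derivStep S X)
    (fun o _ ih => ⋂ (β : Set.Iio o), ih β.1 β.2)

/-- `α(S)`: the least ordinal where the process stabilizes. -/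
noncomputable def kernelOrd (S : Set (ℕ → ℕ)) : Ordinal.{0} :=
  sInf {α | dSeq S α = dSeq S (α + 1)}

/-- `S_∞`, the kernel. -/
noncomputable def kernel (S : Set (ℕ → ℕ)) : Set (List ℕ) := dSeq S (kernelOrd S)

/-- `β(σ)`: the least ordinal `α` with `σ ∉ S_α`. -/
noncomputable def bOrd (S : Set (ℕ → ℕ)) (σ : List ℕ) : Ordinal.{0} :=
  sInf {α | σ ∉ dSeq S α}

open Classical in
/-- `S` is guessable. -/
def Guessable (S : Set (ℕ → ℕ)) : Prop :=
  ∃ G : List ℕ → ℕ, ∀ f : ℕ → ℕ,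
    Tendsto (fun n => G (seg f n)) atTop (𝓝 (if f ∈ S then 1 else 0))

/-- `Δ⁰₂`: both a countable union of closed sets and a countable intersection of open sets. -/
def IsDelta02 (S : Set (ℕ → ℕ)) : Prop :=
  (∃ F : ℕ → Set (ℕ → ℕ), (∀ n, IsClosed (F n)) ∧ S = ⋃ n, F n) ∧
  (∃ U : ℕ → Set (ℕ → ℕ), (∀ n, IsOpen (U n)) ∧ S = ⋂ n, U n)


lemma dSeq_succ (S : Set (ℕ → ℕ)) (α : Ordinal.{0}) :
    dSeq S (α + 1) = derivStep S (dSeq S α) := by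
  simp [dSeq, Ordinal.limitRecOn_succ]

lemma dSeq_limit (S : Set (ℕ → ℕ)) {o : Ordinal.{0}} (ho : Order.IsSuccLimit o) :
    dSeq S o = ⋂ (β : Set.Iio o), dSeq S β.1 := by
  rw [dSeq, Ordinal.limitRecOn_limit _ _ _ _ ho]
  rfl

lemma derivStep_subset (S : Set (ℕ → ℕ)) (X : Set (List ℕ)) : derivStep S X ⊆ X :=
  fun _ hx => hx.1

lemma dSeq_mono (S : Set (ℕ → ℕ)) : ∀ α β : Ordinal.{0}, β ≤ α → dSeq S α ⊆ dSeq S β := by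
  intro α
  induction α using Ordinal.induction with
  | h α IH =>
    intro β hβ
    rcases eq_or_lt_of_le hβ with rfl | hlt
    · exact le_rfl
    rcases Ordinal.zero_or_succ_or_isSuccLimit α with h0 | ⟨γ, rfl⟩ | hl
    · exact absurd (h0 ▸ hlt) (fun h => not_lt_zero h)
    · have : dSeq S (γ + 1) ⊆ dSeq S γ := by
        rw [dSeq_succ]; exact derivStep_subset S _
      exact this.trans (IH γ (Order.lt_succ γ) β (Order.lt_succ_iff.mp hlt))
    · rw [dSeq_limit S hl]
      exact Set.iInter_subset (fun β : Set.Iio α => dSeq S β.1) ⟨β, hlt⟩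

lemma kernel_fixed (S : Set (ℕ → ℕ)) : kernel S = derivStep S (kernel S) := by
  have hne : {α : Ordinal.{0} | dSeq S α = dSeq S (α + 1)}.Nonempty := by
    rw [Set.nonempty_iff_ne_empty]
    intro hempty
    have hinj : Function.Injective (dSeq S) := by
      intro a b hab
      by_contra hne
      wlog hlt : a < b generalizing a b
      · exact this hab.symm (hne ∘ Eq.symm) (lt_of_le_of_ne (not_lt.mp hlt) (Ne.symm hne))
      have h1 : dSeq S b ⊆ dSeq S (a + 1) :=
        dSeq_mono S b (a + 1) (Order.succ_le_of_lt hlt)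
      have h2 : dSeq S a = dSeq S (a + 1) :=
        le_antisymm (hab ▸ h1) (dSeq_mono S (a + 1) a (le_of_lt (Order.lt_succ a)))
      have hmem : a ∈ {α : Ordinal.{0} | dSeq S α = dSeq S (α + 1)} := h2
      rw [hempty] at hmem
      exact hmem
    exact not_injective_of_ordinal _ hinj
  have := csInf_mem hne
  have h2 : dSeq S (kernelOrd S) = dSeq S (kernelOrd S + 1) := this
  calc kernel S = dSeq S (kernelOrd S + 1) := h2
    _ = derivStep S (kernel S) := dSeq_succ S _

theorem stmt19 (S : Set (ℕ → ℕ)) (h : kernel S ≠ ∅) :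
    (ext (kernel S)).Nonempty ∧ (∃ f ∈ ext (kernel S), f ∈ S) ∧
      (∃ g ∈ ext (kernel S), g ∉ S) := by
  obtain ⟨σ, hσ⟩ := Set.nonempty_iff_ne_empty.mpr h
  rw [kernel_fixed S] at hσ
  obtain ⟨-, f, g, hf, hg, -, -, hfS, hgS⟩ := hσ
  exact ⟨⟨f, hf⟩, ⟨f, hf, hfS⟩, ⟨g, hg, hgS⟩⟩
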